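/- Let (S,ψ) be a right Serre k-functor on C. Then for all objects X, Y and all g : Y ⟶ X, f : X ⟶ S.obj Y one has ψ_{S.obj Y, X}(S.map g)(f) = ψ_{X,Y}(f)(g). If moreover every k-module (Y ⟶ X) is reflexive (Module.IsReflexive k (Y ⟶ X) for all objects X, Y — for instance if k is a field and all hom-spaces are finite dimensional), then S is a fully faithful functor. -/
import Mathlib


open CategoryTheory

universe w v u

/-- Let `(S, ψ)` be a right Serre k-functor on `C`.  Then
`ψ (S Y) X (S.map g) f = ψ X Y f g` for all `g : Y ⟶ X`, `f : X ⟶ S.obj Y`; and if all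
hom-modules `(Y ⟶ X)` are reflexive k-modules, then `S` is fully faithful. -/
theorem rightSerre_linear_fully_faithful
    (k : Type w) [CommRing k] {C : Type u} [Category.{v} C] [Preadditive C]
    [CategoryTheory.Linear k C] (S : C ⥤ C) [S.Additive] [S.Linear k]
    (ψ : ∀ X Y : C, (X ⟶ S.obj Y) ≃ₗ[k] Module.Dual k (Y ⟶ X))
    (hnat₁ : ∀ (X Z Y : C) (x : Z ⟶ X) (f : X ⟶ S.obj Y) (z : Y ⟶ Z),
        ψ Z Y (x ≫ f) z = ψ X Y f (z ≫ x))
    (hnat₂ : ∀ (X Y Z : C) (y : Y ⟶ Z) (f : X ⟶ S.obj Y) (h : Z ⟶ X),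
        ψ X Z (f ≫ S.map y) h = ψ X Y f (y ≫ h)) :
    (∀ (X Y : C) (g : Y ⟶ X) (f : X ⟶ S.obj Y),
        ψ (S.obj Y) X (S.map g) f = ψ X Y f g) ∧
      ((∀ X Y : C, Module.IsReflexive k (Y ⟶ X)) → S.Full ∧ S.Faithful) := by

  have key : ∀ (X Y : C) (g : Y ⟶ X) (f : X ⟶ S.obj Y),
      ψ (S.obj Y) X (S.map g) f = ψ X Y f g := by
    intro X Y g f
    have h1 := hnat₂ (S.obj Y) Y X g (𝟙 (S.obj Y)) f
    have h2 := hnat₁ (S.obj Y) X Y f (𝟙 (S.obj Y)) g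
    simp only [Category.id_comp, Category.comp_id] at h1 h2
    rw [h1, ← h2]
  refine ⟨key, fun hrefl => ?_⟩
  have bij : ∀ X Y : C, Function.Bijective (fun g : Y ⟶ X => S.map g) := by
    intro X Y
    have := hrefl X Y
    constructor
    · intro g g' h
      apply (Module.bijective_dual_eval k (Y ⟶ X)).injective
      apply LinearMap.ext
      intro φ
      simp only [Module.Dual.eval_apply]
      calc φ g = ψ X Y ((ψ X Y).symm φ) g := by rw [LinearEquiv.apply_symm_apply]
        _ = ψ (S.obj Y) X (S.map g) ((ψ X Y).symm φ) := (key X Y g _).symm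
        _ = ψ (S.obj Y) X (S.map g') ((ψ X Y).symm φ) := by
              simpa using congrArg (fun t => ψ (S.obj Y) X t ((ψ X Y).symm φ)) h
        _ = ψ X Y ((ψ X Y).symm φ) g' := key X Y g' _
        _ = φ g' := by rw [LinearEquiv.apply_symm_apply]
    · intro h
      obtain ⟨g, hg⟩ := (Module.bijective_dual_eval k (Y ⟶ X)).surjective
        ((ψ (S.obj Y) X h) ∘ₗ (ψ X Y).symm.toLinearMap)
      refine ⟨g, (ψ (S.obj Y) X).injective ?_⟩
      apply LinearMap.ext
      intro f
      have := congrArg (fun F : Module.Dual k (Module.Dual k (Y ⟶ X)) => F (ψ X Y f)) hg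
      simp only [Module.Dual.eval_apply, LinearMap.coe_comp, Function.comp_apply,
        LinearEquiv.coe_coe, LinearEquiv.symm_apply_apply] at this
      rw [key X Y g f, this]
  exact ⟨⟨fun {X Y} => (bij Y X).surjective⟩, ⟨fun {X Y} {f g} => fun h => (bij Y X).injective h⟩⟩
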